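/- Let $(R,\mathfrak{m})$ be a two-dimensional regular local ring with regular system of parameters $x, y$, and let $0 < \alpha < \beta < n$ be integers with $\beta + 2 \leq 2\alpha$. Set $I = (x^3, x^2y^{\alpha}, xy^{\beta}, y^n)$. Then $x^2 y^{\alpha - 1}$ is integral over $I$ but $x^2y^{\alpha-1} \notin I$; in particular $I$ is not integrally closed. -/

import Mathlib

open Ideal IsLocalRing Submodule

/-- `z` is integral over the ideal `I`: it satisfies an equation
`z^k + c₁ z^(k-1) + ⋯ + c_k = 0` with `cᵢ ∈ Iⁱ`. -/
def IsIntegralOverIdeal {R : Type*} [CommRing R] (I : Ideal R) (z : R) : Prop :=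
  ∃ k : ℕ, 0 < k ∧ ∃ c : ℕ → R, (∀ i ∈ Finset.Icc 1 k, c i ∈ I ^ i) ∧
    z ^ k + ∑ i ∈ Finset.Icc 1 k, c i * z ^ (k - i) = 0

section Aux

variable {R : Type*} [CommRing R]

/-- The `n`-th symbolic power of a prime ideal `q`. -/
def symbPow (q : Ideal R) (hq : q.IsPrime) (n : ℕ) : Ideal R where
  carrier := {r | ∃ s, s ∉ q ∧ s * r ∈ q ^ n}
  add_mem' := by
    rintro a b ⟨s, hs, hsa⟩ ⟨t, ht, htb⟩
    refine ⟨s * t, fun h => (hq.mem_or_mem h).elim hs ht, ?_⟩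
    have h : s * t * (a + b) = t * (s * a) + s * (t * b) := by ring
    rw [h]
    exact add_mem (Ideal.mul_mem_left _ _ hsa) (Ideal.mul_mem_left _ _ htb)
  zero_mem' :=
    ⟨1, fun h => hq.ne_top (Ideal.eq_top_of_isUnit_mem _ h isUnit_one), by simp⟩
  smul_mem' := by
    rintro c r ⟨s, hs, hsr⟩
    refine ⟨s, hs, ?_⟩
    have h : s * (c • r) = c * (s * r) := by simp only [smul_eq_mul]; ring
    rw [h]
    exact Ideal.mul_mem_left _ _ hsr

variable [IsLocalRing R]

lemma quot_unit (z w b : R) (hm' : maximalIdeal R = Ideal.span {z, w})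
    (hb : Ideal.Quotient.mk (Ideal.span {z}) b ∉
      Ideal.span {Ideal.Quotient.mk (Ideal.span {z}) w}) :
    IsUnit (Ideal.Quotient.mk (Ideal.span {z}) b) := by
  set π := Ideal.Quotient.mk (Ideal.span {z}) with hπ
  by_cases hbm : b ∈ maximalIdeal R
  · rw [hm'] at hbm
    obtain ⟨u, v, huv⟩ := Ideal.mem_span_pair.mp hbm
    exfalso
    apply hb
    have hz0 : π z = 0 :=
      Ideal.Quotient.eq_zero_iff_mem.mpr (Ideal.mem_span_singleton_self z)
    have : π b = π v * π w := by
      rw [← huv]; simp [_root_.map_add, _root_.map_mul, hz0]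
    rw [this]
    exact Ideal.mul_mem_left _ _ (Ideal.subset_span rfl)
  · have : IsUnit b := by
      by_contra h
      exact hbm ((IsLocalRing.mem_maximalIdeal b).mpr h)
    exact this.map π

variable [IsDomain R] [IsNoetherianRing R]

lemma quot_decomp (z w : R) (hm' : maximalIdeal R = Ideal.span {z, w})
    (hw : ¬ IsUnit (Ideal.Quotient.mk (Ideal.span {z}) w)) (ζ : R ⧸ Ideal.span {z})
    (hζ : ζ ≠ 0) :
    ∃ (j : ℕ) (c : R ⧸ Ideal.span {z}), IsUnit c ∧
      ζ = c * (Ideal.Quotient.mk (Ideal.span {z}) w) ^ j := by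
  classical
  set π := Ideal.Quotient.mk (Ideal.span {z}) with hπ
  have hzm : z ∈ maximalIdeal R := hm' ▸ Ideal.subset_span (Set.mem_insert _ _)
  have h1 : Ideal.span {z} ≤ maximalIdeal R :=
    Ideal.span_le.mpr (Set.singleton_subset_iff.mpr hzm)
  have hztop : Ideal.span {z} ≠ ⊤ := fun h =>
    (maximalIdeal.isMaximal R).ne_top (top_unique (h ▸ h1))
  haveI : Nontrivial (R ⧸ Ideal.span {z}) := Ideal.Quotient.nontrivial_iff.mpr hztop
  haveI : IsLocalRing (R ⧸ Ideal.span {z}) :=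
    IsLocalRing.of_surjective' π Ideal.Quotient.mk_surjective
  have hWtop : Ideal.span {π w} ≠ ⊤ := by rwa [Ne, Ideal.span_singleton_eq_top]
  have hbot := Ideal.iInf_pow_eq_bot_of_isLocalRing (Ideal.span {π w}) hWtop
  have hex : ∃ j, ζ ∉ Ideal.span {π w} ^ j := by
    by_contra h
    push_neg at h
    refine hζ ?_
    have hh : ζ ∈ ⨅ j : ℕ, Ideal.span {π w} ^ j :=
      (Submodule.mem_iInf (fun j : ℕ => Ideal.span {π w} ^ j)).mpr h
    rw [hbot] at hh
    exact (Submodule.mem_bot (R ⧸ Ideal.span {z})).mp hh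
  have hj1 : ζ ∉ Ideal.span {π w} ^ (Nat.find hex) := Nat.find_spec hex
  have hj0pos : Nat.find hex ≠ 0 := by
    intro h
    apply hj1
    rw [h, pow_zero, Ideal.one_eq_top]
    exact Submodule.mem_top
  set j := Nat.find hex - 1 with hjdef
  have hj : ζ ∈ Ideal.span {π w} ^ j := by
    by_contra h
    exact Nat.find_min hex (show j < Nat.find hex by omega) h
  have hj1' : ζ ∉ Ideal.span {π w} ^ (j + 1) := by
    have h : j + 1 = Nat.find hex := by omega
    rw [h]; exact hj1
  rw [Ideal.span_singleton_pow] at hj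
  obtain ⟨c, hc⟩ := Ideal.mem_span_singleton'.mp hj
  have hcw : c ∉ Ideal.span {π w} := by
    intro h
    obtain ⟨d, hd⟩ := Ideal.mem_span_singleton'.mp h
    apply hj1'
    rw [Ideal.span_singleton_pow]
    exact Ideal.mem_span_singleton'.mpr ⟨d, by rw [pow_succ, ← hc, ← hd]; ring⟩
  obtain ⟨b, rfl⟩ := Ideal.Quotient.mk_surjective c
  exact ⟨j, π b, quot_unit z w b hm' hcw, hc.symm⟩

lemma pit_aux (z w : R) (K : ℕ) (hm' : maximalIdeal R = Ideal.span {z, w})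
    (hK : w ^ K ∈ Ideal.span {z}) (q : Ideal R) (hq : q.IsPrime) (hq0 : q ≠ ⊥)
    (hqm : q < maximalIdeal R) : False := by
  classical
  set π := Ideal.Quotient.mk (Ideal.span {z}) with hπ
  have hzm : z ∈ maximalIdeal R := hm' ▸ Ideal.subset_span (Set.mem_insert _ _)
  have h1 : Ideal.span {z} ≤ maximalIdeal R :=
    Ideal.span_le.mpr (Set.singleton_subset_iff.mpr hzm)
  have hztop : Ideal.span {z} ≠ ⊤ := fun h =>
    (maximalIdeal.isMaximal R).ne_top (top_unique (h ▸ h1))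
  haveI : Nontrivial (R ⧸ Ideal.span {z}) := Ideal.Quotient.nontrivial_iff.mpr hztop
  haveI : IsLocalRing (R ⧸ Ideal.span {z}) :=
    IsLocalRing.of_surjective' π Ideal.Quotient.mk_surjective
  have hwK : (π w) ^ K = 0 := by
    rw [← _root_.map_pow]; exact Ideal.Quotient.eq_zero_iff_mem.mpr hK
  have hwu : ¬ IsUnit (π w) := by
    intro h
    have h2 := h.pow (n := K)
    rw [hwK] at h2
    exact zero_ne_one (isUnit_zero_iff.mp h2)
  have hzq : z ∉ q := by
    intro hzq
    have hKq : w ^ K ∈ q := Ideal.span_le.mpr (Set.singleton_subset_iff.mpr hzq) hK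
    have hwq : w ∈ q := hq.mem_of_pow_mem K hKq
    have hle : maximalIdeal R ≤ q := by
      rw [hm']
      exact Ideal.span_le.mpr
        (Set.insert_subset_iff.mpr ⟨hzq, Set.singleton_subset_iff.mpr hwq⟩)
    exact absurd hle (not_le_of_gt hqm)
  -- symbolic powers
  set J : ℕ → Ideal R := fun n => symbPow q hq n with hJdef
  have hJanti : ∀ n, J (n + 1) ≤ J n := by
    rintro n r ⟨s, hs, hsr⟩
    exact ⟨s, hs, Ideal.pow_le_pow_right (Nat.le_succ n) hsr⟩
  have hpowJ : ∀ n, q ^ n ≤ J n := fun n r hr =>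
    ⟨1, fun h => hq.ne_top (Ideal.eq_top_of_isUnit_mem _ h isUnit_one), by simpa⟩
  have hprimary : ∀ n r, z * r ∈ J n → r ∈ J n := by
    rintro n r ⟨s, hs, hsr⟩
    exact ⟨s * z, fun h => (hq.mem_or_mem h).elim hs hzq,
      by rwa [show s * z * r = s * (z * r) by ring]⟩
  set C : ℕ → Ideal (R ⧸ Ideal.span {z}) := fun n => (J n).map π with hC
  have hCanti : ∀ n, C (n + 1) ≤ C n := fun n => Ideal.map_mono (hJanti n)
  have hexC : ∀ n, ∃ j, (π w) ^ j ∈ C n := fun n => ⟨K, by rw [hwK]; exact zero_mem _⟩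
  set g : ℕ → ℕ := fun n => Nat.find (hexC n) with hg
  have hgspec : ∀ n, (π w) ^ (g n) ∈ C n := fun n => Nat.find_spec (hexC n)
  have hgmono : ∀ n, g n ≤ g (n + 1) := fun n =>
    Nat.find_le ((hCanti n) (hgspec (n + 1)))
  have hgK : ∀ n, g n ≤ K := fun n => Nat.find_le (by rw [hwK]; exact zero_mem _)
  have hCle : ∀ n, C n ≤ Ideal.span {(π w) ^ (g n)} := by
    intro n ζ hζ
    rcases eq_or_ne ζ 0 with rfl | hζ0
    · exact zero_mem _
    obtain ⟨j, c, hcu, rfl⟩ := quot_decomp z w hm' hwu ζ hζ0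
    obtain ⟨u, rfl⟩ := hcu
    have hwj : (π w) ^ j ∈ C n := by
      have h := (C n).mul_mem_left (↑u⁻¹ : R ⧸ Ideal.span {z}) hζ
      rwa [← mul_assoc, Units.inv_mul, one_mul] at h
    have hgj : g n ≤ j := Nat.find_le hwj
    refine Ideal.mem_span_singleton'.mpr ⟨↑u * (π w) ^ (j - g n), ?_⟩
    rw [mul_assoc, ← pow_add, Nat.sub_add_cancel hgj]
  -- pigeonhole
  have hstab : ∃ n, g n = g (n + 1) := by
    by_contra h
    push_neg at h
    have hsm : StrictMono g := strictMono_nat_of_lt_succ fun n =>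
      lt_of_le_of_ne (hgmono n) (h n)
    have h2 : K + 1 ≤ g (K + 1) := hsm.le_apply
    have h3 := hgK (K + 1)
    omega
  obtain ⟨n, hn⟩ := hstab
  have hCeq : C n ≤ C (n + 1) := by
    refine le_trans (hCle n) ?_
    rw [hn]
    exact Ideal.span_le.mpr (Set.singleton_subset_iff.mpr (hgspec (n + 1)))
  have hJstep : J n ≤ J (n + 1) := by
    apply Submodule.le_of_le_smul_of_le_jacobson_bot (I := maximalIdeal R)
      (IsNoetherian.noetherian (J n))
      ((IsLocalRing.jacobson_eq_maximalIdeal ⊥ bot_ne_top).ge)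
    intro r hr
    have hπr : π r ∈ C (n + 1) := hCeq (Ideal.mem_map_of_mem π hr)
    obtain ⟨r', hr', hrr⟩ :=
      (Ideal.mem_map_iff_of_surjective π Ideal.Quotient.mk_surjective).mp hπr
    have hsub : r - r' ∈ Ideal.span {z} := Ideal.Quotient.eq.mp hrr.symm
    obtain ⟨cc, hcc⟩ := Ideal.mem_span_singleton'.mp hsub
    have hccJ : cc ∈ J n := hprimary n cc
      (by rw [show z * cc = cc * z from mul_comm _ _, hcc]
          exact sub_mem hr (hJanti n hr'))
    refine Submodule.mem_sup.mpr ⟨r', hr', cc * z, ?_, by rw [hcc]; ring⟩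
    have h2 : z * cc ∈ maximalIdeal R • J n := Submodule.smul_mem_smul hzm hccJ
    rwa [mul_comm cc z]
  -- localization at q
  haveI := hq
  set A := Localization.AtPrime q with hA
  set φ := algebraMap R A with hφ
  have hM0 : (0 : R) ∉ q.primeCompl := fun h => h q.zero_mem
  haveI : IsDomain A :=
    IsLocalization.isDomain_localization (le_nonZeroDivisors_of_noZeroDivisors hM0)
  haveI : IsNoetherianRing A :=
    IsLocalization.isNoetherianRing q.primeCompl A inferInstance
  have hQm : q.map φ ≤ maximalIdeal A :=
    le_of_eq Localization.AtPrime.map_eq_maximalIdeal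
  have hstep : (q.map φ) ^ n ≤ maximalIdeal A • ((q.map φ) ^ n) := by
    have h1 : (q.map φ) ^ n ≤ (q.map φ) ^ (n + 1) := by
      rw [← Ideal.map_pow, ← Ideal.map_pow, Ideal.map_le_iff_le_comap]
      intro r hr
      obtain ⟨s, hs, hsr⟩ := hJstep (hpowJ n hr)
      have hu : IsUnit (φ s) := (IsLocalization.AtPrime.isUnit_to_map_iff A q s).mpr hs
      obtain ⟨u, hu⟩ := hu
      have h2 : φ (s * r) ∈ Ideal.map φ (q ^ (n + 1)) := Ideal.mem_map_of_mem φ hsr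
      rw [_root_.map_mul, ← hu] at h2
      show φ r ∈ Ideal.map φ (q ^ (n + 1))
      have h3 := Ideal.mul_mem_left _ (↑u⁻¹ : A) h2
      rwa [← mul_assoc, Units.inv_mul, one_mul] at h3
    calc (q.map φ) ^ n ≤ (q.map φ) ^ (n + 1) := h1
      _ = (q.map φ) * (q.map φ) ^ n := by rw [pow_succ, mul_comm]
      _ ≤ maximalIdeal A * ((q.map φ) ^ n) := Ideal.mul_mono_left hQm
      _ = maximalIdeal A • ((q.map φ) ^ n) := (Ideal.smul_eq_mul _ _).symm
  have hbotQ : (q.map φ) ^ n = ⊥ :=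
    Submodule.eq_bot_of_le_smul_of_le_jacobson_bot (maximalIdeal A) _
      (IsNoetherian.noetherian _) hstep
      ((IsLocalRing.jacobson_eq_maximalIdeal ⊥ bot_ne_top).ge)
  obtain ⟨t, htq, ht0⟩ := (Submodule.ne_bot_iff q).mp hq0
  have htQ : φ t ^ n ∈ (q.map φ) ^ n := Ideal.pow_mem_pow (Ideal.mem_map_of_mem φ htq) n
  rw [hbotQ] at htQ
  have htz : φ t ^ n = 0 := (Submodule.mem_bot A).mp htQ
  have hφinj : Function.Injective φ :=
    IsLocalization.injective A (le_nonZeroDivisors_of_noZeroDivisors hM0)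
  rcases Nat.eq_zero_or_pos n with hn0 | hn0
  · rw [hn0, pow_zero] at htz
    exact one_ne_zero htz
  · have hφt : φ t = 0 := (pow_eq_zero_iff (hn0.ne' : n ≠ 0)).mp htz
    exact ht0 (hφinj (by rw [hφt, map_zero]))

end Aux

/-- For `0 < α < β < n` with `β + 2 ≤ 2α` and `I = (x³, x²yᵅ, xyᵝ, yⁿ)`:
`x²y^(α-1)` is integral over `I` but not in `I`; in particular `I` is not
integrally closed. -/
theorem not_integrally_closed {R : Type*} [CommRing R] [IsDomain R] [IsNoetherianRing R]
    [IsLocalRing R] (x y : R) (hm : maximalIdeal R = Ideal.span {x, y})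
    (hdim : ringKrullDim R = 2)
    (α β n : ℕ) (hα : 0 < α) (hαβ : α < β) (hβn : β < n) (hβα : β + 2 ≤ 2 * α)
    (I : Ideal R)
    (hI : I = Ideal.span {x ^ 3, x ^ 2 * y ^ α, x * y ^ β, y ^ n}) :
    IsIntegralOverIdeal I (x ^ 2 * y ^ (α - 1)) ∧ x ^ 2 * y ^ (α - 1) ∉ I := by
  have hα3 : 3 ≤ α := by omega
  have hxm : x ∈ maximalIdeal R := hm ▸ Ideal.subset_span (Set.mem_insert _ _)
  have hym : y ∈ maximalIdeal R := hm ▸ Ideal.subset_span (Set.mem_insert_of_mem _ rfl)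
  constructor
  · -- integrality
    refine ⟨2, two_pos,
      fun i => if i = 2 then -((x ^ 2 * y ^ (α - 1)) * (x ^ 2 * y ^ (α - 1))) else 0,
      ?_, ?_⟩
    · intro i hi
      rcases Finset.mem_Icc.mp hi with ⟨h1i, hi2⟩
      interval_cases i
      · simp
      · show (if 2 = 2 then -(x ^ 2 * y ^ (α - 1) * (x ^ 2 * y ^ (α - 1))) else 0) ∈ I ^ 2
        rw [if_pos rfl]
        apply neg_mem
        have hx3 : x ^ 3 ∈ I := hI ▸ Ideal.subset_span (Set.mem_insert _ _)
        have hxyβ : x * y ^ β ∈ I := hI ▸ Ideal.subset_span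
          (Set.mem_insert_of_mem _ (Set.mem_insert_of_mem _ (Set.mem_insert _ _)))
        have h1 : (α - 1) + (α - 1) = β + (2 * α - 2 - β) := by omega
        have hkey : (x ^ 2 * y ^ (α - 1)) * (x ^ 2 * y ^ (α - 1)) =
            (x ^ 3 * (x * y ^ β)) * y ^ (2 * α - 2 - β) := by
          calc (x ^ 2 * y ^ (α - 1)) * (x ^ 2 * y ^ (α - 1))
              = x ^ 4 * y ^ ((α - 1) + (α - 1)) := by ring
            _ = x ^ 4 * y ^ (β + (2 * α - 2 - β)) := by rw [h1]
            _ = (x ^ 3 * (x * y ^ β)) * y ^ (2 * α - 2 - β) := by ring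
        rw [hkey]
        refine Ideal.mul_mem_right _ _ ?_
        rw [pow_two]
        exact Ideal.mul_mem_mul hx3 hxyβ
    · have hIcc : Finset.Icc 1 2 = ({1, 2} : Finset ℕ) := rfl
      rw [hIcc, Finset.sum_insert (by decide), Finset.sum_singleton]
      norm_num
      ring
  · -- non-membership
    intro hzI
    rw [hI] at hzI
    -- extract a chain of primes
    have hchain : ∃ p : LTSeries (PrimeSpectrum R), 2 ≤ p.length := by
      by_contra hc
      push_neg at hc
      have hle : ringKrullDim R ≤ (1 : ℕ) := by
        refine iSup_le fun p => ?_
        have h := hc p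
        exact_mod_cast Nat.cast_le.mpr (by omega : p.length ≤ 1)
      rw [hdim] at hle
      norm_num at hle
    obtain ⟨p, hp⟩ := hchain
    have h01 : p ⟨0, by omega⟩ < p ⟨1, by omega⟩ := p.strictMono (by simp [Fin.lt_def])
    have h12 : p ⟨1, by omega⟩ < p ⟨2, by omega⟩ := p.strictMono (by simp [Fin.lt_def])
    set q : Ideal R := (p ⟨1, by omega⟩).asIdeal with hqdef
    have hq : q.IsPrime := (p ⟨1, by omega⟩).isPrime
    have hq0 : q ≠ ⊥ := by
      intro h
      have h2 : (p ⟨0, by omega⟩).asIdeal < (p ⟨1, by omega⟩).asIdeal := h01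
      rw [← hqdef, h] at h2
      exact not_lt_bot h2
    have hqm : q < maximalIdeal R := by
      have h2m : (p ⟨2, by omega⟩).asIdeal ≤ maximalIdeal R :=
        IsLocalRing.le_maximalIdeal (p ⟨2, by omega⟩).isPrime.ne_top
      exact lt_of_lt_of_le h12 h2m
    -- basic regularity facts
    have hx0 : x ≠ 0 := by
      intro h
      exact pit_aux y x 1 (by rw [hm, Set.pair_comm])
        (by rw [pow_one, h]; exact zero_mem _) q hq hq0 hqm
    set π := Ideal.Quotient.mk (Ideal.span {x}) with hπ
    have hNZD : ∀ a : R, y * a ∈ Ideal.span {x} → a ∈ Ideal.span {x} := by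
      intro a ha
      by_contra hna
      have hπa : π a ≠ 0 := fun h => hna (Ideal.Quotient.eq_zero_iff_mem.mp h)
      have h0 : π y * π a = 0 := by
        rw [← _root_.map_mul]; exact Ideal.Quotient.eq_zero_iff_mem.mpr ha
      by_cases hyu : IsUnit (π y)
      · obtain ⟨u, hu⟩ := hyu
        apply hπa
        calc π a = ↑u⁻¹ * (π y * π a) := by rw [← hu, ← mul_assoc, Units.inv_mul, one_mul]
          _ = 0 := by rw [h0, mul_zero]
      · obtain ⟨j, c, hcu, hdecomp⟩ := quot_decomp x y hm hyu (π a) hπa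
        obtain ⟨u, hu⟩ := hcu
        have hc0 : ↑u * (π y) ^ (j + 1) = 0 := by
          calc ↑u * (π y) ^ (j + 1) = π y * (↑u * (π y) ^ j) := by ring
            _ = π y * π a := by rw [hu, ← hdecomp]
            _ = 0 := h0
        have hyj : (π y) ^ (j + 1) = 0 := by
          calc (π y) ^ (j + 1) = ↑u⁻¹ * (↑u * (π y) ^ (j + 1)) := by
                rw [← mul_assoc, Units.inv_mul, one_mul]
            _ = 0 := by rw [hc0, mul_zero]
        have hyxs : y ^ (j + 1) ∈ Ideal.span {x} := by
          rw [← _root_.map_pow] at hyj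
          exact Ideal.Quotient.eq_zero_iff_mem.mp hyj
        exact pit_aux x y (j + 1) hm hyxs q hq hq0 hqm
    have hyx : ∀ (j : ℕ) (e : R), y ^ j * e ∈ Ideal.span {x} → e ∈ Ideal.span {x} := by
      intro j
      induction j with
      | zero => intro e he; simpa using he
      | succ j ih =>
        intro e he
        have h : y * (y ^ j * e) ∈ Ideal.span {x} := by
          rwa [show y * (y ^ j * e) = y ^ (j + 1) * e by ring]
        exact ih e (hNZD _ h)
    have hL1 : ∀ (k : ℕ) (c : R), x * c ∈ Ideal.span {y ^ k} → c ∈ Ideal.span {y ^ k} := by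
      intro k c hc
      obtain ⟨d, hd⟩ := Ideal.mem_span_singleton'.mp hc
      have hdx : d ∈ Ideal.span {x} := by
        apply hyx k d
        rw [show y ^ k * d = d * y ^ k from mul_comm _ _, hd]
        exact Ideal.mem_span_singleton'.mpr ⟨c, mul_comm c x⟩
      obtain ⟨e, he⟩ := Ideal.mem_span_singleton'.mp hdx
      have heq : x * c = x * (e * y ^ k) := by rw [← hd, ← he]; ring
      have hc' : c = e * y ^ k := mul_left_cancel₀ hx0 heq
      exact Ideal.mem_span_singleton'.mpr ⟨e, hc'.symm⟩
    -- unpack membership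
    obtain ⟨a, z1, hz1, heq1⟩ := Submodule.mem_span_insert.mp hzI
    obtain ⟨b, z2, hz2, heq2⟩ := Submodule.mem_span_insert.mp hz1
    obtain ⟨c, z3, hz3, heq3⟩ := Submodule.mem_span_insert.mp hz2
    obtain ⟨d, hd⟩ := Ideal.mem_span_singleton'.mp hz3
    have heq : x ^ 2 * y ^ (α - 1) =
        a * x ^ 3 + (b * (x ^ 2 * y ^ α) + (c * (x * y ^ β) + d * y ^ n)) := by
      rw [heq1, heq2, heq3, ← hd]; simp [smul_eq_mul]
    have e1 : y ^ α = y ^ (α - 1) * y := by rw [← pow_succ]; congr 1; omega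
    have e2 : y ^ n = y ^ β * y ^ (n - β) := by rw [← pow_add]; congr 1; omega
    have e3 : y ^ β = y ^ (α - 1) * y ^ (β - (α - 1)) := by rw [← pow_add]; congr 1; omega
    have key : x * (x * (y ^ (α - 1) - (a * x + b * y ^ α))) =
        (c * x + d * y ^ (n - β)) * y ^ β := by
      linear_combination heq + d * e2
    have h1 : x * (x * (y ^ (α - 1) - (a * x + b * y ^ α))) ∈ Ideal.span {y ^ β} :=
      Ideal.mem_span_singleton'.mpr ⟨c * x + d * y ^ (n - β), key.symm⟩
    have h2 := hL1 β _ h1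
    have h3 := hL1 β _ h2
    obtain ⟨e, he⟩ := Ideal.mem_span_singleton'.mp h3
    have hueq : y ^ (α - 1) * (1 - (b * y + e * y ^ (β - (α - 1)))) = a * x := by
      linear_combination (-1 : R) * he + b * e1 + e * e3
    have hmem : b * y + e * y ^ (β - (α - 1)) ∈ maximalIdeal R := by
      refine add_mem (Ideal.mul_mem_left _ _ hym) (Ideal.mul_mem_left _ _ ?_)
      have hpos : β - (α - 1) = (β - (α - 1) - 1) + 1 := by omega
      rw [hpos, pow_succ]
      exact Ideal.mul_mem_left _ _ hym
    have hu : IsUnit (1 - (b * y + e * y ^ (β - (α - 1)))) :=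
      IsLocalRing.isUnit_one_sub_self_of_mem_nonunits _
        ((IsLocalRing.mem_maximalIdeal _).mp hmem)
    obtain ⟨u, hu⟩ := hu
    have hueq' : y ^ (α - 1) * ↑u = a * x := by rw [hu]; exact hueq
    have hyin : y ^ (α - 1) ∈ Ideal.span {x} := by
      refine Ideal.mem_span_singleton'.mpr ⟨↑u⁻¹ * a, ?_⟩
      calc (↑u⁻¹ : R) * a * x = ↑u⁻¹ * (y ^ (α - 1) * ↑u) := by rw [mul_assoc, ← hueq']
        _ = y ^ (α - 1) := by rw [mul_comm ((↑u⁻¹ : R)), mul_assoc, Units.mul_inv, mul_one]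
    have h1x : (1 : R) ∈ Ideal.span {x} := hyx (α - 1) 1 (by simpa using hyin)
    obtain ⟨t, ht⟩ := Ideal.mem_span_singleton'.mp h1x
    exact (mem_nonunits_iff.mp ((IsLocalRing.mem_maximalIdeal x).mp hxm))
      (IsUnit.of_mul_eq_one (a := x) t (by rw [mul_comm]; exact ht))
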